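/- For d ≥ 4, let G be a connected multigraph with m edges satisfying Δ(G) ≤ d. Then α'(G) ≥ m/⌊3d/2⌋, and equality holds if and only if m = 0 or G is a Shannon multigraph of degree d. -/

import Mathlib

/-- A multigraph: a finite vertex set together with symmetric, loopless
edge multiplicities supported on the vertex set. -/
structure Multigraph (V : Type*) where
  verts : Finset V
  mult : V → V → ℕ
  symm : ∀ u v, mult u v = mult v u
  loopless : ∀ v, mult v v = 0
  supp : ∀ u v, mult u v ≠ 0 → u ∈ verts ∧ v ∈ verts

namespace Multigraph

variable {V : Type*}

/-- The number of edges of `G` (counted with multiplicity). -/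
def edgeCount (G : Multigraph V) : ℕ :=
  (∑ u ∈ G.verts, ∑ v ∈ G.verts, G.mult u v) / 2

/-- The degree of a vertex: the sum of the multiplicities of edges at it. -/
def degree (G : Multigraph V) (v : V) : ℕ :=
  ∑ u ∈ G.verts, G.mult v u

/-- The maximum degree `Δ(G)`. -/
def maxDegree (G : Multigraph V) : ℕ :=
  G.verts.sup G.degree

/-- A matching: a set of edges (each recorded as an ordered pair of its
endpoints, present in the multigraph) that pairwise share no endpoint. -/
def IsMatching (G : Multigraph V) (M : Finset (V × V)) : Prop :=
  (∀ p ∈ M, 0 < G.mult p.1 p.2) ∧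
    ∀ p ∈ M, ∀ q ∈ M, p ≠ q →
      p.1 ≠ q.1 ∧ p.1 ≠ q.2 ∧ p.2 ≠ q.1 ∧ p.2 ≠ q.2

/-- The matching number `α'(G)`: the maximum size of a matching. -/
noncomputable def matchingNumber (G : Multigraph V) : ℕ :=
  sSup {n | ∃ M : Finset (V × V), G.IsMatching M ∧ M.card = n}

/-- `G` is connected if every pair of vertices is joined by a path. -/
def Connected (G : Multigraph V) : Prop :=
  ∀ u ∈ G.verts, ∀ v ∈ G.verts,
    Relation.ReflTransGen (fun a b => 0 < G.mult a b) u v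

/-- `G` is a Shannon multigraph of degree `d`: three vertices `x, y, z` with
`μ(xy) = μ(xz) = ⌊d/2⌋` and `μ(yz) = ⌈d/2⌉`. -/
def IsShannon [DecidableEq V] (G : Multigraph V) (d : ℕ) : Prop :=
  ∃ x y z : V, x ≠ y ∧ x ≠ z ∧ y ≠ z ∧ G.verts = {x, y, z} ∧
    G.mult x y = d / 2 ∧ G.mult x z = d / 2 ∧ G.mult y z = (d + 1) / 2

/-- A proper edge coloring of `G` with colors from `Fin c`: each pair of
vertices receives a set of colors of size equal to its multiplicity (one color
per parallel edge, so parallel edges get distinct colors), symmetrically, and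
edges sharing an endpoint get disjoint color sets. -/
def IsProperEdgeColoring (G : Multigraph V) {c : ℕ}
    (f : V → V → Finset (Fin c)) : Prop :=
  (∀ u v, f u v = f v u) ∧ (∀ u v, (f u v).card = G.mult u v) ∧
    ∀ u v w, v ≠ w → Disjoint (f u v) (f u w)

/-- The chromatic index `χ'(G)`: minimum number of colors in a proper edge
coloring. -/
noncomputable def chromaticIndex (G : Multigraph V) : ℕ :=
  sInf {c | ∃ f : V → V → Finset (Fin c), G.IsProperEdgeColoring f}

/-- The number of edges of `G` receiving color `i` in the coloring `f`. -/
def colorClassSize (G : Multigraph V) {c : ℕ}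
    (f : V → V → Finset (Fin c)) (i : Fin c) : ℕ :=
  (∑ u ∈ G.verts, ∑ v ∈ G.verts, if i ∈ f u v then 1 else 0) / 2

end Multigraph
namespace Multigraph

set_option linter.unusedSectionVars false

variable {V : Type*} [DecidableEq V]

/-- Adjacency relation of a multigraph. -/
def Adj (G : Multigraph V) (a b : V) : Prop := 0 < G.mult a b

lemma Adj.symm2 {G : Multigraph V} {a b : V} (h : G.Adj a b) : G.Adj b a := by
  unfold Adj at *; rw [G.symm b a]; exact h

lemma Adj.ne {G : Multigraph V} {a b : V} (h : G.Adj a b) : a ≠ b := by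
  rintro rfl; simp [Adj, G.loopless] at h

lemma Adj.mem_left {G : Multigraph V} {a b : V} (h : G.Adj a b) : a ∈ G.verts :=
  (G.supp a b h.ne').1

lemma Adj.mem_right {G : Multigraph V} {a b : V} (h : G.Adj a b) : b ∈ G.verts :=
  (G.supp a b h.ne').2

/-- `v` is saturated (covered) by the matching `M`. -/
def Sat (M : Finset (V × V)) (v : V) : Prop := ∃ p ∈ M, v = p.1 ∨ v = p.2

lemma IsMatching.adj_of_mem {G : Multigraph V} {M : Finset (V × V)}
    (hM : G.IsMatching M) {p : V × V} (hp : p ∈ M) : G.Adj p.1 p.2 := hM.1 p hp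

lemma IsMatching.ne_of_mem {G : Multigraph V} {M : Finset (V × V)}
    (hM : G.IsMatching M) {p : V × V} (hp : p ∈ M) : p.1 ≠ p.2 :=
  (hM.adj_of_mem hp).ne

/-- a vertex lies in at most one edge of a matching -/
lemma IsMatching.eq_of_sat {G : Multigraph V} {M : Finset (V × V)}
    (hM : G.IsMatching M) {p q : V × V} (hp : p ∈ M) (hq : q ∈ M) {v : V}
    (hvp : v = p.1 ∨ v = p.2) (hvq : v = q.1 ∨ v = q.2) : p = q := by
  by_contra hne
  obtain ⟨h1, h2, h3, h4⟩ := hM.2 p hp q hq hne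
  rcases hvp with rfl | rfl <;> rcases hvq with h | h <;> simp_all

lemma isMatching_empty (G : Multigraph V) : G.IsMatching (∅ : Finset (V × V)) := by
  constructor <;> simp

lemma IsMatching.card_le_verts {G : Multigraph V} {M : Finset (V × V)}
    (hM : G.IsMatching M) : M.card ≤ G.verts.card := by
  have : M.card = (M.image Prod.fst).card := by
    rw [Finset.card_image_of_injOn]
    intro p hp q hq hpq
    exact hM.eq_of_sat hp hq (Or.inl rfl) (Or.inl hpq)
  rw [this]
  apply Finset.card_le_card
  intro x hx
  obtain ⟨p, hp, rfl⟩ := Finset.mem_image.mp hx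
  exact (hM.adj_of_mem hp).mem_left

lemma matchingNumber_bddAbove (G : Multigraph V) :
    BddAbove {n | ∃ M : Finset (V × V), G.IsMatching M ∧ M.card = n} := by
  refine ⟨G.verts.card, ?_⟩
  rintro n ⟨M, hM, rfl⟩
  exact hM.card_le_verts

lemma matchingNumber_nonempty (G : Multigraph V) :
    {n | ∃ M : Finset (V × V), G.IsMatching M ∧ M.card = n}.Nonempty :=
  ⟨0, ∅, G.isMatching_empty, by simp⟩

lemma exists_max_matching (G : Multigraph V) :
    ∃ M : Finset (V × V), G.IsMatching M ∧ M.card = G.matchingNumber :=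
  Nat.sSup_mem G.matchingNumber_nonempty G.matchingNumber_bddAbove

lemma IsMatching.card_le_matchingNumber {G : Multigraph V} {M : Finset (V × V)}
    (hM : G.IsMatching M) : M.card ≤ G.matchingNumber :=
  le_csSup G.matchingNumber_bddAbove ⟨M, hM, rfl⟩

end Multigraph
namespace Multigraph

set_option linter.unusedSectionVars false

variable {V : Type*} [DecidableEq V]

/-- total multiplicity over a vertex set -/
def Tsum (G : Multigraph V) (s : Finset V) : ℕ := ∑ u ∈ s, ∑ v ∈ s, G.mult u v

lemma Tsum_insert (G : Multigraph V) {s : Finset V} {a : V} (ha : a ∉ s) :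
    Tsum G (insert a s) = Tsum G s + 2 * ∑ v ∈ s, G.mult a v := by
  unfold Tsum
  simp only [Finset.sum_insert ha, G.loopless, zero_add]
  rw [Finset.sum_add_distrib]
  have h1 : ∑ u ∈ s, G.mult u a = ∑ u ∈ s, G.mult a u :=
    Finset.sum_congr rfl fun u _ => G.symm u a
  rw [h1]; ring

lemma even_Tsum (G : Multigraph V) (s : Finset V) : Even (Tsum G s) := by
  classical
  induction s using Finset.induction_on with
  | empty => simp [Tsum]
  | insert _ _ ha ih =>
    rw [Tsum_insert G ha]
    exact ih.add (even_two_mul _)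

lemma two_mul_edgeCount (G : Multigraph V) : 2 * G.edgeCount = Tsum G G.verts := by
  obtain ⟨k, hk⟩ := G.even_Tsum G.verts
  have : Tsum G G.verts = 2 * k := by omega
  unfold edgeCount
  rw [show (∑ u ∈ G.verts, ∑ v ∈ G.verts, G.mult u v) = Tsum G G.verts from rfl, this]
  omega

lemma sum_degree (G : Multigraph V) : ∑ v ∈ G.verts, G.degree v = Tsum G G.verts := rfl

lemma degree_le_of_maxDegree {G : Multigraph V} {d : ℕ} (hΔ : G.maxDegree ≤ d)
    {v : V} (hv : v ∈ G.verts) : G.degree v ≤ d :=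
  le_trans (Finset.le_sup hv) hΔ

lemma two_mul_edgeCount_le {G : Multigraph V} {d : ℕ} (hΔ : G.maxDegree ≤ d) :
    2 * G.edgeCount ≤ d * G.verts.card := by
  rw [two_mul_edgeCount, ← sum_degree]
  calc ∑ v ∈ G.verts, G.degree v ≤ ∑ _v ∈ G.verts, d :=
        Finset.sum_le_sum fun v hv => degree_le_of_maxDegree hΔ hv
    _ = d * G.verts.card := by rw [Finset.sum_const, smul_eq_mul, mul_comm]

/-- Delete a vertex from a multigraph. -/
def delete (G : Multigraph V) (x : V) : Multigraph V where
  verts := G.verts.erase x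
  mult a b := if a = x ∨ b = x then 0 else G.mult a b
  symm := by intro u v; rw [G.symm u v]; exact if_congr or_comm rfl rfl
  loopless := by intro v; by_cases h : v = x <;> simp [h, G.loopless]
  supp := by
    intro u v h
    split at h
    · simp at h
    · next hne =>
      push_neg at hne
      obtain ⟨h1, h2⟩ := G.supp u v h
      exact ⟨Finset.mem_erase.mpr ⟨hne.1, h1⟩, Finset.mem_erase.mpr ⟨hne.2, h2⟩⟩

lemma delete_mult (G : Multigraph V) (x a b : V) :
    (G.delete x).mult a b = if a = x ∨ b = x then 0 else G.mult a b := rfl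

lemma delete_mult_of_ne {G : Multigraph V} {x a b : V} (ha : a ≠ x) (hb : b ≠ x) :
    (G.delete x).mult a b = G.mult a b := by
  rw [delete_mult]; simp [ha, hb]

lemma adj_delete_iff {G : Multigraph V} {x a b : V} :
    (G.delete x).Adj a b ↔ G.Adj a b ∧ a ≠ x ∧ b ≠ x := by
  unfold Adj
  rw [delete_mult]
  split
  · next h => simp only [lt_irrefl, false_iff]; rintro ⟨-, h1, h2⟩; tauto
  · next h => push_neg at h; tauto

lemma isMatching_delete_iff {G : Multigraph V} {x : V} {M : Finset (V × V)} :
    (G.delete x).IsMatching M ↔ G.IsMatching M ∧ ∀ p ∈ M, p.1 ≠ x ∧ p.2 ≠ x := by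
  constructor
  · intro h
    have hp : ∀ p ∈ M, G.Adj p.1 p.2 ∧ p.1 ≠ x ∧ p.2 ≠ x := by
      intro p hp
      exact adj_delete_iff.mp (h.1 p hp)
    exact ⟨⟨fun p hpm => (hp p hpm).1, h.2⟩, fun p hpm => (hp p hpm).2⟩
  · rintro ⟨hM, hx⟩
    refine ⟨fun p hp => ?_, hM.2⟩
    exact adj_delete_iff.mpr ⟨hM.1 p hp, hx p hp⟩

lemma Tsum_delete (G : Multigraph V) (x : V) (s : Finset V) (hx : x ∉ s) :
    Tsum (G.delete x) s = Tsum G s := by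
  unfold Tsum
  refine Finset.sum_congr rfl fun u hu => Finset.sum_congr rfl fun v hv => ?_
  exact delete_mult_of_ne (by rintro rfl; exact hx hu) (by rintro rfl; exact hx hv)

lemma edgeCount_delete {G : Multigraph V} {x : V} (hx : x ∈ G.verts) :
    G.edgeCount = (G.delete x).edgeCount + G.degree x := by
  have h1 : G.verts = insert x (G.verts.erase x) := (Finset.insert_erase hx).symm
  have h2 : 2 * G.edgeCount = Tsum G G.verts := two_mul_edgeCount G
  have h3 : 2 * (G.delete x).edgeCount = Tsum (G.delete x) (G.verts.erase x) :=
    two_mul_edgeCount (G.delete x)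
  rw [Tsum_delete G x _ (Finset.notMem_erase x _)] at h3
  have h4 : Tsum G G.verts = Tsum G (G.verts.erase x) + 2 * ∑ v ∈ G.verts.erase x, G.mult x v := by
    conv_lhs => rw [h1]
    exact Tsum_insert G (Finset.notMem_erase x _)
  have h5 : G.degree x = ∑ v ∈ G.verts.erase x, G.mult x v := by
    unfold degree
    conv_lhs => rw [h1]
    rw [Finset.sum_insert (Finset.notMem_erase x _), G.loopless, zero_add]
  omega

lemma maxDegree_delete_le (G : Multigraph V) (x : V) :
    (G.delete x).maxDegree ≤ G.maxDegree := by
  apply Finset.sup_le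
  intro v hv
  have hv' : v ∈ G.verts := Finset.mem_of_mem_erase hv
  calc (G.delete x).degree v ≤ G.degree v := by
        unfold degree
        calc ∑ u ∈ (G.delete x).verts, (G.delete x).mult v u
            ≤ ∑ u ∈ (G.delete x).verts, G.mult v u := by
              apply Finset.sum_le_sum
              intro u _
              rw [delete_mult]; split <;> simp
          _ ≤ ∑ u ∈ G.verts, G.mult v u :=
              Finset.sum_le_sum_of_subset (Finset.erase_subset x G.verts)
    _ ≤ G.maxDegree := Finset.le_sup hv'

end Multigraph
namespace Multigraph

set_option linter.unusedSectionVars false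

variable {V : Type*} [DecidableEq V]

/-- Restrict a multigraph to a set of vertices. -/
def restrict (G : Multigraph V) (A : Finset V) : Multigraph V where
  verts := G.verts ∩ A
  mult a b := if a ∈ A ∧ b ∈ A then G.mult a b else 0
  symm := by
    intro u v
    rw [G.symm u v]; exact if_congr and_comm rfl rfl
  loopless := by intro v; split <;> simp [G.loopless]
  supp := by
    intro u v h
    split at h
    · next hin =>
      obtain ⟨h1, h2⟩ := G.supp u v h
      exact ⟨Finset.mem_inter.mpr ⟨h1, hin.1⟩, Finset.mem_inter.mpr ⟨h2, hin.2⟩⟩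
    · simp at h

lemma restrict_mult (G : Multigraph V) (A : Finset V) (a b : V) :
    (G.restrict A).mult a b = if a ∈ A ∧ b ∈ A then G.mult a b else 0 := rfl

lemma restrict_verts (G : Multigraph V) (A : Finset V) :
    (G.restrict A).verts = G.verts ∩ A := rfl

lemma adj_restrict_iff {G : Multigraph V} {A : Finset V} {a b : V} :
    (G.restrict A).Adj a b ↔ G.Adj a b ∧ a ∈ A ∧ b ∈ A := by
  unfold Adj
  rw [restrict_mult]
  split
  · next h => tauto
  · next h => simp only [lt_irrefl, false_iff]; tauto

lemma isMatching_restrict_iff {G : Multigraph V} {A : Finset V} {M : Finset (V × V)} :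
    (G.restrict A).IsMatching M ↔ G.IsMatching M ∧ ∀ p ∈ M, p.1 ∈ A ∧ p.2 ∈ A := by
  constructor
  · intro h
    have hp : ∀ p ∈ M, G.Adj p.1 p.2 ∧ p.1 ∈ A ∧ p.2 ∈ A := by
      intro p hp
      exact adj_restrict_iff.mp (h.1 p hp)
    exact ⟨⟨fun p hpm => (hp p hpm).1, h.2⟩, fun p hpm => (hp p hpm).2⟩
  · rintro ⟨hM, hx⟩
    exact ⟨fun p hp => adj_restrict_iff.mpr ⟨hM.1 p hp, hx p hp⟩, hM.2⟩

lemma maxDegree_restrict_le (G : Multigraph V) (A : Finset V) :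
    (G.restrict A).maxDegree ≤ G.maxDegree := by
  apply Finset.sup_le
  intro v hv
  have hv' : v ∈ G.verts := (Finset.mem_inter.mp hv).1
  calc (G.restrict A).degree v ≤ G.degree v := by
        unfold degree
        calc ∑ u ∈ (G.restrict A).verts, (G.restrict A).mult v u
            ≤ ∑ u ∈ (G.restrict A).verts, G.mult v u := by
              apply Finset.sum_le_sum
              intro u _
              rw [restrict_mult]; split <;> simp
          _ ≤ ∑ u ∈ G.verts, G.mult v u :=
              Finset.sum_le_sum_of_subset Finset.inter_subset_left
    _ ≤ G.maxDegree := Finset.le_sup hv'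

section Split

variable {G : Multigraph V} {A : Finset V}

/-- no edges leave `A` -/
def NoCross (G : Multigraph V) (A : Finset V) : Prop :=
  ∀ a ∈ A, ∀ b, b ∉ A → G.mult a b = 0

lemma Tsum_split (hA : A ⊆ G.verts) (hc : G.NoCross A) :
    Tsum G G.verts = Tsum G A + Tsum G (G.verts \ A) := by
  have hU : A ∪ G.verts \ A = G.verts := Finset.union_sdiff_of_subset hA
  have hd : Disjoint A (G.verts \ A) := Finset.disjoint_sdiff
  have key : ∀ s : Finset V, ∑ u ∈ s, ∑ v ∈ A ∪ G.verts \ A, G.mult u v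
      = ∑ u ∈ s, (∑ v ∈ A, G.mult u v + ∑ v ∈ G.verts \ A, G.mult u v) :=
    fun s => Finset.sum_congr rfl (fun u _ => Finset.sum_union hd)
  unfold Tsum
  conv_lhs => rw [← hU]
  rw [Finset.sum_union hd, key, key, Finset.sum_add_distrib, Finset.sum_add_distrib]
  have z1 : ∑ u ∈ A, ∑ v ∈ G.verts \ A, G.mult u v = 0 :=
    Finset.sum_eq_zero fun u hu => Finset.sum_eq_zero fun v hv =>
      hc u hu v (Finset.mem_sdiff.mp hv).2
  have z2 : ∑ u ∈ G.verts \ A, ∑ v ∈ A, G.mult u v = 0 :=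
    Finset.sum_eq_zero fun u hu => Finset.sum_eq_zero fun v hv => by
      rw [G.symm]; exact hc v hv u (Finset.mem_sdiff.mp hu).2
  omega

lemma Tsum_restrict_eq (G : Multigraph V) (A : Finset V) :
    Tsum (G.restrict A) A = Tsum G A := by
  unfold Tsum
  refine Finset.sum_congr rfl fun u hu => Finset.sum_congr rfl fun v hv => ?_
  rw [restrict_mult]
  simp [hu, hv]

lemma edgeCount_split (hA : A ⊆ G.verts) (hc : G.NoCross A) :
    G.edgeCount = (G.restrict A).edgeCount + (G.restrict (G.verts \ A)).edgeCount := by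
  have e1 : (G.restrict A).verts = A := by
    rw [restrict_verts]; exact Finset.inter_eq_right.mpr hA
  have e2 : (G.restrict (G.verts \ A)).verts = G.verts \ A := by
    rw [restrict_verts]; exact Finset.inter_eq_right.mpr (Finset.sdiff_subset)
  have h1 := two_mul_edgeCount G
  have h2 := two_mul_edgeCount (G.restrict A)
  have h3 := two_mul_edgeCount (G.restrict (G.verts \ A))
  rw [e1, Tsum_restrict_eq] at h2
  rw [e2, Tsum_restrict_eq] at h3
  have h4 := Tsum_split hA hc
  omega

lemma matchingNumber_split (hA : A ⊆ G.verts) (hc : G.NoCross A) :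
    G.matchingNumber = (G.restrict A).matchingNumber +
      (G.restrict (G.verts \ A)).matchingNumber := by
  set B := G.verts \ A with hB
  apply le_antisymm
  · -- split a max matching of G
    obtain ⟨M, hM, hcard⟩ := G.exists_max_matching
    rw [← hcard]
    classical
    set MA := M.filter (fun p => p.1 ∈ A) with hMA
    set MB := M.filter (fun p => ¬ p.1 ∈ A) with hMB
    have hsplit : ∀ p ∈ M, (p.1 ∈ A ∧ p.2 ∈ A) ∨ (p.1 ∈ B ∧ p.2 ∈ B) := by
      intro p hp
      have hadj := hM.adj_of_mem hp
      have h1 : p.1 ∈ G.verts := hadj.mem_left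
      have h2 : p.2 ∈ G.verts := hadj.mem_right
      by_cases hA1 : p.1 ∈ A
      · left
        refine ⟨hA1, ?_⟩
        by_contra h2A
        exact absurd (hc p.1 hA1 p.2 h2A) hadj.ne'
      · right
        refine ⟨Finset.mem_sdiff.mpr ⟨h1, hA1⟩, Finset.mem_sdiff.mpr ⟨h2, ?_⟩⟩
        intro h2A
        have := hc p.2 h2A p.1 hA1
        rw [G.symm] at this
        exact absurd this hadj.ne'
    have hMAm : (G.restrict A).IsMatching MA := by
      rw [isMatching_restrict_iff]
      constructor
      · exact ⟨fun p hp => hM.1 p (Finset.mem_filter.mp hp).1,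
          fun p hp q hq => hM.2 p (Finset.mem_filter.mp hp).1 q (Finset.mem_filter.mp hq).1⟩
      · intro p hp
        obtain ⟨hpM, hp1⟩ := Finset.mem_filter.mp hp
        rcases hsplit p hpM with h | h
        · exact h
        · exact absurd hp1 fun h' => (Finset.mem_sdiff.mp h.1).2 h'
    have hMBm : (G.restrict B).IsMatching MB := by
      rw [isMatching_restrict_iff]
      constructor
      · exact ⟨fun p hp => hM.1 p (Finset.mem_filter.mp hp).1,
          fun p hp q hq => hM.2 p (Finset.mem_filter.mp hp).1 q (Finset.mem_filter.mp hq).1⟩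
      · intro p hp
        obtain ⟨hpM, hp1⟩ := Finset.mem_filter.mp hp
        rcases hsplit p hpM with h | h
        · exact absurd h.1 hp1
        · exact h
    have : M.card = MA.card + MB.card := (Finset.card_filter_add_card_filter_not _).symm
    rw [this]
    exact Nat.add_le_add hMAm.card_le_matchingNumber hMBm.card_le_matchingNumber
  · -- combine max matchings
    obtain ⟨MA, hMA, hcA⟩ := (G.restrict A).exists_max_matching
    obtain ⟨MB, hMB, hcB⟩ := (G.restrict B).exists_max_matching
    rw [← hcA, ← hcB]
    obtain ⟨hMA', hA'⟩ := isMatching_restrict_iff.mp hMA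
    obtain ⟨hMB', hB'⟩ := isMatching_restrict_iff.mp hMB
    have hdisj : Disjoint MA MB := by
      rw [Finset.disjoint_left]
      intro p hp hp'
      have h1 := (hA' p hp).1
      have h2 := (hB' p hp').1
      exact (Finset.mem_sdiff.mp h2).2 h1
    have hunion : G.IsMatching (MA ∪ MB) := by
      constructor
      · intro p hp
        rcases Finset.mem_union.mp hp with h | h
        · exact hMA'.1 p h
        · exact hMB'.1 p h
      · intro p hp q hq hne
        rcases Finset.mem_union.mp hp with h | h <;> rcases Finset.mem_union.mp hq with h' | h'
        · exact hMA'.2 p h q h' hne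
        · have hp1 := (hA' p h).1; have hp2 := (hA' p h).2
          have hq1 := Finset.mem_sdiff.mp (hB' q h').1
          have hq2 := Finset.mem_sdiff.mp (hB' q h').2
          refine ⟨fun he => ?_, fun he => ?_, fun he => ?_, fun he => ?_⟩
          · rw [he] at hp1; exact hq1.2 hp1
          · rw [he] at hp1; exact hq2.2 hp1
          · rw [he] at hp2; exact hq1.2 hp2
          · rw [he] at hp2; exact hq2.2 hp2
        · have hq1 := (hA' q h').1; have hq2 := (hA' q h').2
          have hp1 := Finset.mem_sdiff.mp (hB' p h).1
          have hp2 := Finset.mem_sdiff.mp (hB' p h).2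
          refine ⟨fun he => ?_, fun he => ?_, fun he => ?_, fun he => ?_⟩
          · rw [← he] at hq1; exact hp1.2 hq1
          · rw [← he] at hq2; exact hp1.2 hq2
          · rw [← he] at hq1; exact hp2.2 hq1
          · rw [← he] at hq2; exact hp2.2 hq2
        · exact hMB'.2 p h q h' hne
    calc MA.card + MB.card = (MA ∪ MB).card := (Finset.card_union_of_disjoint hdisj).symm
      _ ≤ G.matchingNumber := hunion.card_le_matchingNumber

end Split

end Multigraph
namespace Multigraph

set_option linter.unusedSectionVars false

variable {V : Type*} [DecidableEq V]

lemma Sat.mono {M M' : Finset (V × V)} (h : M' ⊆ M) {v : V} (hs : Sat M' v) :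
    Sat M v := by
  obtain ⟨p, hp, ho⟩ := hs
  exact ⟨p, h hp, ho⟩

lemma not_sat_iff {M : Finset (V × V)} {v : V} :
    ¬ Sat M v ↔ ∀ p ∈ M, v ≠ p.1 ∧ v ≠ p.2 := by
  unfold Sat
  push_neg
  rfl

lemma IsMatching.subset {G : Multigraph V} {M M' : Finset (V × V)}
    (hM : G.IsMatching M) (h : M' ⊆ M) : G.IsMatching M' :=
  ⟨fun p hp => hM.1 p (h hp), fun p hp q hq => hM.2 p (h hp) q (h hq)⟩

lemma sat_elim {G : Multigraph V} {M : Finset (V × V)} (hM : G.IsMatching M)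
    {t : V} (h : Sat M t) :
    ∃ p ∈ M, ∃ t1, t1 ≠ t ∧ (p = (t, t1) ∨ p = (t1, t)) := by
  obtain ⟨p, hp, ho⟩ := h
  rcases ho with h1 | h2
  · exact ⟨p, hp, p.2, by rw [h1]; exact (hM.ne_of_mem hp).symm, Or.inl (by rw [h1])⟩
  · exact ⟨p, hp, p.1, by rw [h2]; exact hM.ne_of_mem hp, Or.inr (by rw [h2])⟩

lemma adj_of_pair {G : Multigraph V} {M : Finset (V × V)} (hM : G.IsMatching M)
    {p : V × V} (hp : p ∈ M) {a b : V} (hpe : p = (a, b) ∨ p = (b, a)) :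
    G.Adj a b := by
  rcases hpe with rfl | rfl
  · exact hM.adj_of_mem hp
  · exact (hM.adj_of_mem hp).symm2

lemma sat_of_pair {M : Finset (V × V)} {p : V × V} (hp : p ∈ M) {a b : V}
    (hpe : p = (a, b) ∨ p = (b, a)) : Sat M a := by
  rcases hpe with rfl | rfl
  · exact ⟨(a, b), hp, Or.inl rfl⟩
  · exact ⟨(b, a), hp, Or.inr rfl⟩

/-- inserting an edge joining two unsaturated vertices into a matching -/
lemma IsMatching.insert_pair {G : Multigraph V} {M : Finset (V × V)}
    (hM : G.IsMatching M) {a b : V} (hadj : G.Adj a b)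
    (ha : ¬ Sat M a) (hb : ¬ Sat M b) :
    G.IsMatching (insert (a, b) M) ∧ (a, b) ∉ M := by
  have hmem : (a, b) ∉ M := fun h => ha ⟨(a, b), h, Or.inl rfl⟩
  refine ⟨⟨?_, ?_⟩, hmem⟩
  · intro p hp
    rcases Finset.mem_insert.mp hp with rfl | h
    · exact hadj
    · exact hM.1 p h
  · intro p hp q hq hne
    rw [not_sat_iff] at ha hb
    rcases Finset.mem_insert.mp hp with rfl | hp' <;>
      rcases Finset.mem_insert.mp hq with rfl | hq'
    · exact absurd rfl hne
    · exact ⟨fun h => (ha q hq').1 h, fun h => (ha q hq').2 h,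
        fun h => (hb q hq').1 h, fun h => (hb q hq').2 h⟩
    · exact ⟨fun h => (ha p hp').1 h.symm, fun h => (hb p hp').1 h.symm,
        fun h => (ha p hp').2 h.symm, fun h => (hb p hp').2 h.symm⟩
    · exact hM.2 p hp' q hq' hne

/-- the erased vertex-containing pair leaves the vertex unsaturated -/
lemma not_sat_erase {G : Multigraph V} {M : Finset (V × V)} (hM : G.IsMatching M)
    {p : V × V} (hp : p ∈ M) {v : V} (hv : v = p.1 ∨ v = p.2) :
    ¬ Sat (M.erase p) v := by
  rintro ⟨q, hq, hvq⟩
  have hqM : q ∈ M := Finset.mem_of_mem_erase hq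
  have : p = q := hM.eq_of_sat hp hqM hv hvq
  exact (Finset.ne_of_mem_erase hq) this.symm

/-- **Key swap lemma.** `M`, `N` maximum matchings of the same size, `t`
saturated by `M` but not by `N`.  Then there is a maximum matching missing `t`
and missing every `M`-missed vertex except possibly one. -/
lemma swap_aux : ∀ n : ℕ, ∀ (G : Multigraph V) (M N : Finset (V × V)) (t : V),
    M.card ≤ n →
    G.IsMatching M → G.IsMatching N → M.card = N.card →
    (∀ K : Finset (V × V), G.IsMatching K → K.card ≤ N.card) →
    Sat M t → ¬ Sat N t →
    ∃ M' : Finset (V × V), ∃ z : V, G.IsMatching M' ∧ M'.card = M.card ∧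
      ¬ Sat M' t ∧ ∀ w, ¬ Sat M w → w ≠ z → ¬ Sat M' w := by
  intro n
  induction n with
  | zero =>
    intro G M N t hn hM hN hcard hmax hsat hNt
    rw [Nat.le_zero, Finset.card_eq_zero] at hn
    subst hn
    obtain ⟨p, hp, -⟩ := hsat
    exact absurd hp (Finset.notMem_empty p)
  | succ n ih =>
    intro G M N t hn hM hN hcard hmax hsat hNt
    obtain ⟨p, hpM, t1, ht1t, hpe⟩ := sat_elim hM hsat
    have hadj1 : G.Adj t t1 := adj_of_pair hM hpM (by tauto)
    have hsatMt1 : Sat M t1 := sat_of_pair hpM (by tauto)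
    by_cases hsatN1 : Sat N t1
    swap
    · -- t1 not N-saturated: N + (t,t1) is a bigger matching, contradiction
      obtain ⟨hbig, hnm⟩ := hN.insert_pair hadj1 hNt hsatN1
      have := hmax _ hbig
      rw [Finset.card_insert_of_notMem hnm] at this
      omega
    · obtain ⟨q, hqN, t2, ht2t1, hqe⟩ := sat_elim hN hsatN1
      have hadj2 : G.Adj t1 t2 := adj_of_pair hN hqN (by tauto)
      have hsatNt2 : Sat N t2 := sat_of_pair hqN (by tauto)
      have ht2t : t2 ≠ t := by rintro rfl; exact hNt hsatNt2
      -- `p` is the unique pair of `M` containing `t` or `t1`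
      have huniqp : ∀ r ∈ M, (t = r.1 ∨ t = r.2) ∨ (t1 = r.1 ∨ t1 = r.2) → r = p := by
        intro r hr hor
        rcases hor with h | h
        · exact hM.eq_of_sat hr hpM h (by rcases hpe with rfl | rfl <;> simp)
        · exact hM.eq_of_sat hr hpM h (by rcases hpe with rfl | rfl <;> simp)
      -- `q` is the unique pair of `N` containing `t1` or `t2`
      have huniqq : ∀ r ∈ N, (t1 = r.1 ∨ t1 = r.2) ∨ (t2 = r.1 ∨ t2 = r.2) → r = q := by
        intro r hr hor
        rcases hor with h | h
        · exact hN.eq_of_sat hr hqN h (by rcases hqe with rfl | rfl <;> simp)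
        · exact hN.eq_of_sat hr hqN h (by rcases hqe with rfl | rfl <;> simp)
      by_cases hsatM2 : Sat M t2
      swap
      · -- short swap: M' = M - p + (t1,t2)
        have hME : G.IsMatching (M.erase p) := hM.subset (Finset.erase_subset p M)
        have hnt1 : ¬ Sat (M.erase p) t1 :=
          not_sat_erase hM hpM (by rcases hpe with rfl | rfl <;> simp)
        have hnt2 : ¬ Sat (M.erase p) t2 :=
          fun h => hsatM2 (h.mono (Finset.erase_subset p M))
        obtain ⟨hM', hnm⟩ := hME.insert_pair hadj2 hnt1 hnt2
        refine ⟨insert (t1, t2) (M.erase p), t2, hM', ?_, ?_, ?_⟩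
        · rw [Finset.card_insert_of_notMem hnm,
            Finset.card_erase_of_mem hpM]
          have : 1 ≤ M.card := Finset.card_pos.mpr ⟨p, hpM⟩
          omega
        · rintro ⟨r, hr, hor⟩
          rcases Finset.mem_insert.mp hr with rfl | hr'
          · simp only [] at hor
            rcases hor with h | h
            · exact ht1t h.symm
            · exact ht2t h.symm
          · exact not_sat_erase hM hpM (by rcases hpe with rfl | rfl <;> simp) ⟨r, hr', hor⟩
        · intro w hw hwz
          rintro ⟨r, hr, hor⟩
          rcases Finset.mem_insert.mp hr with rfl | hr'
          · simp only [] at hor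
            rcases hor with rfl | rfl
            · exact hw hsatMt1
            · exact hwz rfl
          · exact hw ⟨r, Finset.mem_of_mem_erase hr', hor⟩
      · -- long case: recurse in G - t - t1
        set G' := (G.delete t).delete t1 with hG'
        have hmultG' : ∀ a b : V, 0 < G'.mult a b → 0 < G.mult a b ∧ a ≠ t ∧ b ≠ t ∧ a ≠ t1 ∧ b ≠ t1 := by
          intro a b h
          have h2 := adj_delete_iff.mp (h : G'.Adj a b)
          have h3 := adj_delete_iff.mp h2.1
          exact ⟨h3.1, h3.2.1, h3.2.2, h2.2.1, h2.2.2⟩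
        have hmatchG' : ∀ K : Finset (V × V), G'.IsMatching K ↔
            (G.IsMatching K ∧ ∀ r ∈ K, r.1 ≠ t ∧ r.2 ≠ t ∧ r.1 ≠ t1 ∧ r.2 ≠ t1) := by
          intro K
          rw [isMatching_delete_iff, isMatching_delete_iff]
          constructor
          · rintro ⟨⟨h1, h2⟩, h3⟩
            exact ⟨h1, fun r hr => ⟨(h2 r hr).1, (h2 r hr).2, (h3 r hr).1, (h3 r hr).2⟩⟩
          · rintro ⟨h1, h2⟩
            exact ⟨⟨h1, fun r hr => ⟨(h2 r hr).1, (h2 r hr).2.1⟩⟩,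
              fun r hr => ⟨(h2 r hr).2.2.1, (h2 r hr).2.2.2⟩⟩
        -- the reduced matchings
        set Mt := M.erase p with hMt
        set Nt := N.erase q with hNt'
        have hMtM : G.IsMatching Mt := hM.subset (Finset.erase_subset p M)
        have hNtM : G.IsMatching Nt := hN.subset (Finset.erase_subset q N)
        have hMt' : G'.IsMatching Mt := by
          rw [hmatchG']
          refine ⟨hMtM, fun r hr => ?_⟩
          have hrM : r ∈ M := Finset.mem_of_mem_erase hr
          have hrp : r ≠ p := Finset.ne_of_mem_erase hr
          refine ⟨?_, ?_, ?_, ?_⟩ <;> intro h <;> exact hrp (huniqp r hrM (by tauto))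
        have hNt'' : G'.IsMatching Nt := by
          rw [hmatchG']
          refine ⟨hNtM, fun r hr => ?_⟩
          have hrN : r ∈ N := Finset.mem_of_mem_erase hr
          have hrq : r ≠ q := Finset.ne_of_mem_erase hr
          refine ⟨?_, ?_, ?_, ?_⟩ <;> intro h
          · exact hNt ⟨r, hrN, Or.inl h.symm⟩
          · exact hNt ⟨r, hrN, Or.inr h.symm⟩
          · exact hrq (huniqq r hrN (by tauto))
          · exact hrq (huniqq r hrN (by tauto))
        have hcards : Mt.card = Nt.card := by
          rw [hMt, hNt', Finset.card_erase_of_mem hpM, Finset.card_erase_of_mem hqN, hcard]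
        have hNcard : 1 ≤ N.card := Finset.card_pos.mpr ⟨q, hqN⟩
        have hMcard : 1 ≤ M.card := Finset.card_pos.mpr ⟨p, hpM⟩
        have hmax' : ∀ K : Finset (V × V), G'.IsMatching K → K.card ≤ Nt.card := by
          intro K hK
          obtain ⟨hKG, hKavoid⟩ := (hmatchG' K).mp hK
          have hKt : ¬ Sat K t := by
            rintro ⟨r, hr, hor⟩
            rcases hor with h | h
            · exact (hKavoid r hr).1 h.symm
            · exact (hKavoid r hr).2.1 h.symm
          have hKt1 : ¬ Sat K t1 := by
            rintro ⟨r, hr, hor⟩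
            rcases hor with h | h
            · exact (hKavoid r hr).2.2.1 h.symm
            · exact (hKavoid r hr).2.2.2 h.symm
          obtain ⟨hbig, hnm⟩ := hKG.insert_pair hadj1 hKt hKt1
          have := hmax _ hbig
          rw [Finset.card_insert_of_notMem hnm] at this
          rw [hNt', Finset.card_erase_of_mem hqN]
          omega
        have hsatMt2 : Sat Mt t2 := by
          obtain ⟨r, hrM, hor⟩ := hsatM2
          refine ⟨r, Finset.mem_erase.mpr ⟨?_, hrM⟩, hor⟩
          rintro rfl
          rcases hpe with rfl | rfl <;> rcases hor with h | h <;> simp only [] at h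
          · exact ht2t h
          · exact ht2t1 h
          · exact ht2t1 h
          · exact ht2t h
        have hnsatNt2 : ¬ Sat Nt t2 := not_sat_erase hN hqN (by rcases hqe with rfl | rfl <;> simp)
        have hMtn : Mt.card ≤ n := by
          rw [hMt, Finset.card_erase_of_mem hpM]; omega
        obtain ⟨M1, z1, hM1, hM1card, hM1t2, hM1miss⟩ :=
          ih G' Mt Nt t2 hMtn hMt' hNt'' hcards hmax' hsatMt2 hnsatNt2
        -- lift back
        obtain ⟨hM1G, hM1avoid⟩ := (hmatchG' M1).mp hM1
        have hnsatM1t1 : ¬ Sat M1 t1 := by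
          rintro ⟨r, hr, hor⟩
          rcases hor with h | h
          · exact (hM1avoid r hr).2.2.1 h.symm
          · exact (hM1avoid r hr).2.2.2 h.symm
        have hnsatM1t : ¬ Sat M1 t := by
          rintro ⟨r, hr, hor⟩
          rcases hor with h | h
          · exact (hM1avoid r hr).1 h.symm
          · exact (hM1avoid r hr).2.1 h.symm
        obtain ⟨hM'match, hnm⟩ := hM1G.insert_pair hadj2 hnsatM1t1 hM1t2
        refine ⟨insert (t1, t2) M1, z1, hM'match, ?_, ?_, ?_⟩
        · rw [Finset.card_insert_of_notMem hnm, hM1card, hMt,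
            Finset.card_erase_of_mem hpM]
          omega
        · rintro ⟨r, hr, hor⟩
          rcases Finset.mem_insert.mp hr with rfl | hr'
          · simp only [] at hor
            rcases hor with h | h
            · exact ht1t h.symm
            · exact ht2t h.symm
          · exact hnsatM1t ⟨r, hr', hor⟩
        · intro w hw hwz
          have hwMt : ¬ Sat Mt w := fun h => hw (h.mono (Finset.erase_subset p M))
          have hw1 : w ≠ t1 := fun h => hw (h ▸ hsatMt1)
          have hw2 : w ≠ t2 := fun h => hw (h ▸ hsatM2)
          rintro ⟨r, hr, hor⟩
          rcases Finset.mem_insert.mp hr with rfl | hr'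
          · simp only [] at hor
            rcases hor with h | h
            · exact hw1 h
            · exact hw2 h
          · exact hM1miss w hwMt hwz ⟨r, hr', hor⟩

end Multigraph
namespace Multigraph

set_option linter.unusedSectionVars false

variable {V : Type*} [DecidableEq V]

/-- walks of length exactly `n` -/
def ReachN (G : Multigraph V) : ℕ → V → V → Prop
  | 0, u, v => u = v
  | (n+1), u, v => ∃ w, G.Adj u w ∧ ReachN G n w v

lemma reachN_zero {G : Multigraph V} {u v : V} : G.ReachN 0 u v ↔ u = v := Iff.rfl

lemma reachN_succ {G : Multigraph V} {n : ℕ} {u v : V} :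
    G.ReachN (n + 1) u v ↔ ∃ w, G.Adj u w ∧ G.ReachN n w v := Iff.rfl

lemma reflTransGen_iff_reachN {G : Multigraph V} {u v : V} :
    Relation.ReflTransGen (fun a b => 0 < G.mult a b) u v ↔ ∃ n, G.ReachN n u v := by
  constructor
  · intro h
    induction h using Relation.ReflTransGen.head_induction_on with
    | refl => exact ⟨0, rfl⟩
    | head hadj _ ih =>
      obtain ⟨n, hn⟩ := ih
      exact ⟨n + 1, _, hadj, hn⟩
  · rintro ⟨n, hn⟩
    induction n generalizing u with
    | zero => rw [show u = v from hn]
    | succ n ih =>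
      obtain ⟨w, hadj, hr⟩ := hn
      exact Relation.ReflTransGen.head hadj (ih hr)

/-- Gallai's lemma: in a connected graph in which every vertex is missed by
some maximum matching, each maximum matching misses at most one vertex. -/
lemma gallai {G : Multigraph V}
    (hcon : ∀ u ∈ G.verts, ∀ v ∈ G.verts,
      Relation.ReflTransGen (fun a b => 0 < G.mult a b) u v)
    (hmiss : ∀ v ∈ G.verts, ∃ N : Finset (V × V),
      G.IsMatching N ∧ N.card = G.matchingNumber ∧ ¬ Sat N v) :
    ∀ M : Finset (V × V), G.IsMatching M → M.card = G.matchingNumber →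
      ∀ u ∈ G.verts, ∀ v ∈ G.verts, ¬ Sat M u → ¬ Sat M v → u = v := by
  classical
  by_contra hcontra
  push_neg at hcontra
  obtain ⟨M0, hM0, hM0c, u0, hu0, v0, hv0, hsu0, hsv0, huv0⟩ := hcontra
  set P : ℕ → Prop := fun k => ∃ M : Finset (V × V), ∃ u v : V,
    G.IsMatching M ∧ M.card = G.matchingNumber ∧ u ∈ G.verts ∧ v ∈ G.verts ∧
    ¬ Sat M u ∧ ¬ Sat M v ∧ u ≠ v ∧ G.ReachN k u v with hP
  have hPex : ∃ k, P k := by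
    obtain ⟨n, hn⟩ := reflTransGen_iff_reachN.mp (hcon u0 hu0 v0 hv0)
    exact ⟨n, M0, u0, v0, hM0, hM0c, hu0, hv0, hsu0, hsv0, huv0, hn⟩
  have hspec := Nat.find_spec hPex
  have hmin : ∀ j, j < Nat.find hPex → ¬ P j := fun j hj => Nat.find_min hPex hj
  revert hspec hmin
  generalize Nat.find hPex = k
  intro hspec hmin
  obtain ⟨M, u, v, hM, hMc, hu, hv, hsu, hsv, huv, hreach⟩ := hspec
  match k, hreach, hmin with
  | 0, hreach, hmin => exact huv (reachN_zero.mp hreach)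
  | 1, hreach, hmin =>
    obtain ⟨w, hadj, hw⟩ := reachN_succ.mp hreach
    rw [show w = v from reachN_zero.mp hw] at hadj
    obtain ⟨hbig, hnm⟩ := hM.insert_pair hadj hsu hsv
    have := hbig.card_le_matchingNumber
    rw [Finset.card_insert_of_notMem hnm, hMc] at this
    omega
  | (j+2), hreach, hmin =>
    obtain ⟨t, hadjut, hrt⟩ := reachN_succ.mp hreach
    have htverts : t ∈ G.verts := hadjut.mem_right
    have hj2 : (1 : ℕ) < j + 2 := by omega
    have hjj : j + 1 < j + 2 := by omega
    by_cases htv : t = v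
    · subst htv
      exact hmin 1 hj2 ⟨M, u, t, hM, hMc, hu, htverts, hsu, hsv, huv, t, hadjut, rfl⟩
    by_cases hsatMt : Sat M t
    swap
    · exact hmin (j+1) hjj ⟨M, t, v, hM, hMc, htverts, hv, hsatMt, hsv, htv, hrt⟩
    · obtain ⟨N, hN, hNc, hNt⟩ := hmiss t htverts
      have hmax : ∀ K : Finset (V × V), G.IsMatching K → K.card ≤ N.card := by
        intro K hK
        rw [hNc]
        exact hK.card_le_matchingNumber
      obtain ⟨M', z, hM', hM'c, hM't, hM'miss⟩ :=
        swap_aux M.card G M N t le_rfl hM hN (by rw [hMc, hNc]) hmax hsatMt hNt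
      have hut : u ≠ t := fun h => hsu (h.symm ▸ hsatMt)
      by_cases hzu : z = u
      · have hzv : z ≠ v := fun h => huv (hzu ▸ h)
        exact hmin (j+1) hjj ⟨M', t, v, hM', by rw [hM'c, hMc], htverts, hv, hM't,
          hM'miss v hsv (fun h => hzv h.symm), htv, hrt⟩
      · exact hmin 1 hj2 ⟨M', u, t, hM', by rw [hM'c, hMc], hu, htverts,
          hM'miss u hsu (fun h => hzu h.symm), hM't, hut, t, hadjut, rfl⟩

/-- saturation as a finset -/
lemma card_verts_le_of_gallai {G : Multigraph V}
    (hcon : ∀ u ∈ G.verts, ∀ v ∈ G.verts,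
      Relation.ReflTransGen (fun a b => 0 < G.mult a b) u v)
    (hmiss : ∀ v ∈ G.verts, ∃ N : Finset (V × V),
      G.IsMatching N ∧ N.card = G.matchingNumber ∧ ¬ Sat N v) :
    G.verts.card ≤ 2 * G.matchingNumber + 1 := by
  classical
  obtain ⟨M, hM, hMc⟩ := G.exists_max_matching
  set S : Finset V := M.image Prod.fst ∪ M.image Prod.snd with hS
  have hmemS : ∀ x, x ∈ S ↔ Sat M x := by
    intro x
    simp only [hS, Finset.mem_union, Finset.mem_image, Sat]
    constructor
    · rintro (⟨p, hp, rfl⟩ | ⟨p, hp, rfl⟩)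
      · exact ⟨p, hp, Or.inl rfl⟩
      · exact ⟨p, hp, Or.inr rfl⟩
    · rintro ⟨p, hp, rfl | rfl⟩
      · exact Or.inl ⟨p, hp, rfl⟩
      · exact Or.inr ⟨p, hp, rfl⟩
  have hSsub : S ⊆ G.verts := by
    intro x hx
    rw [hmemS] at hx
    obtain ⟨p, hp, hor⟩ := hx
    rcases hor with rfl | rfl
    · exact (hM.adj_of_mem hp).mem_left
    · exact (hM.adj_of_mem hp).mem_right
  have hcard1 : (M.image Prod.fst).card = M.card := Finset.card_image_of_injOn
    (fun p hp q hq hpq => hM.eq_of_sat hp hq (Or.inl rfl) (Or.inl hpq))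
  have hcard2 : (M.image Prod.snd).card = M.card := Finset.card_image_of_injOn
    (fun p hp q hq hpq => hM.eq_of_sat hp hq (Or.inr rfl) (Or.inr hpq))
  have hdisj : Disjoint (M.image Prod.fst) (M.image Prod.snd) := by
    rw [Finset.disjoint_left]
    rintro x hx1 hx2
    obtain ⟨p, hp, rfl⟩ := Finset.mem_image.mp hx1
    obtain ⟨q, hq, heq⟩ := Finset.mem_image.mp hx2
    have hpq : q = p := hM.eq_of_sat hq hp (Or.inr heq.symm) (Or.inl rfl)
    subst hpq
    exact hM.ne_of_mem hq heq.symm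
  have hScard : S.card = 2 * M.card := by
    rw [hS, Finset.card_union_of_disjoint hdisj, hcard1, hcard2]
    omega
  have hU : (G.verts \ S).card ≤ 1 := by
    rw [Finset.card_le_one]
    intro a ha b hb
    have ha' := Finset.mem_sdiff.mp ha
    have hb' := Finset.mem_sdiff.mp hb
    refine gallai hcon hmiss M hM hMc a ha'.1 b hb'.1 ?_ ?_
    · rw [← hmemS]; exact ha'.2
    · rw [← hmemS]; exact hb'.2
  have := Finset.card_sdiff_add_card_eq_card hSsub
  omega

end Multigraph
namespace Multigraph

set_option linter.unusedSectionVars false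

variable {V : Type*} [DecidableEq V]

lemma isMatching_singleton {G : Multigraph V} {u v : V} (h : G.Adj u v) :
    G.IsMatching {(u, v)} := by
  constructor
  · intro p hp
    rw [Finset.mem_singleton] at hp
    rw [hp]
    exact h
  · intro p hp q hq hne
    rw [Finset.mem_singleton] at hp hq
    exact absurd (hp.trans hq.symm) hne

lemma one_le_matchingNumber_of_adj {G : Multigraph V} {u v : V} (h : G.Adj u v) :
    1 ≤ G.matchingNumber := by
  have := (isMatching_singleton h).card_le_matchingNumber
  simpa using this

lemma edgeCount_eq_zero_of_no_adj {G : Multigraph V} (h : ∀ u v, ¬ G.Adj u v) :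
    G.edgeCount = 0 := by
  have hT : Tsum G G.verts = 0 := by
    apply Finset.sum_eq_zero
    intro u _
    apply Finset.sum_eq_zero
    intro v _
    exact Nat.eq_zero_of_not_pos (h u v)
  have := two_mul_edgeCount G
  omega

lemma IsMatching.two_mul_card_le_verts {G : Multigraph V} {M : Finset (V × V)}
    (hM : G.IsMatching M) : 2 * M.card ≤ G.verts.card := by
  classical
  set S : Finset V := M.image Prod.fst ∪ M.image Prod.snd with hS
  have hSsub : S ⊆ G.verts := by
    intro x hx
    rw [hS, Finset.mem_union] at hx
    rcases hx with hx | hx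
    · obtain ⟨p, hp, rfl⟩ := Finset.mem_image.mp hx
      exact (hM.adj_of_mem hp).mem_left
    · obtain ⟨p, hp, rfl⟩ := Finset.mem_image.mp hx
      exact (hM.adj_of_mem hp).mem_right
  have hcard1 : (M.image Prod.fst).card = M.card := Finset.card_image_of_injOn
    (fun p hp q hq hpq => hM.eq_of_sat hp hq (Or.inl rfl) (Or.inl hpq))
  have hcard2 : (M.image Prod.snd).card = M.card := Finset.card_image_of_injOn
    (fun p hp q hq hpq => hM.eq_of_sat hp hq (Or.inr rfl) (Or.inr hpq))
  have hdisj : Disjoint (M.image Prod.fst) (M.image Prod.snd) := by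
    rw [Finset.disjoint_left]
    rintro x hx1 hx2
    obtain ⟨p, hp, rfl⟩ := Finset.mem_image.mp hx1
    obtain ⟨q, hq, heq⟩ := Finset.mem_image.mp hx2
    have hpq : q = p := hM.eq_of_sat hq hp (Or.inr heq.symm) (Or.inl rfl)
    subst hpq
    exact hM.ne_of_mem hq heq.symm
  have : S.card = 2 * M.card := by
    rw [hS, Finset.card_union_of_disjoint hdisj, hcard1, hcard2]; omega
  rw [← this]
  exact Finset.card_le_card hSsub

lemma matchingNumber_le_delete_add_one (G : Multigraph V) (x : V) :
    G.matchingNumber ≤ (G.delete x).matchingNumber + 1 := by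
  obtain ⟨M, hM, hMc⟩ := G.exists_max_matching
  by_cases hsat : Sat M x
  · obtain ⟨p, hp, hor⟩ := hsat
    have hM' : (G.delete x).IsMatching (M.erase p) := by
      rw [isMatching_delete_iff]
      refine ⟨hM.subset (Finset.erase_subset p M), fun r hr => ?_⟩
      have hrM : r ∈ M := Finset.mem_of_mem_erase hr
      have hrp : r ≠ p := Finset.ne_of_mem_erase hr
      constructor <;> intro h <;>
        exact hrp (hM.eq_of_sat hrM hp (by rw [h]; tauto) hor)
    have := hM'.card_le_matchingNumber
    rw [Finset.card_erase_of_mem hp] at this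
    have hpos : 1 ≤ M.card := Finset.card_pos.mpr ⟨p, hp⟩
    omega
  · have hM' : (G.delete x).IsMatching M := by
      rw [isMatching_delete_iff]
      refine ⟨hM, fun r hr => ?_⟩
      constructor <;> intro h <;> exact hsat ⟨r, hr, by rw [h]; tauto⟩
    have := hM'.card_le_matchingNumber
    omega

lemma matchingNumber_pos_of_crit {G : Multigraph V} {x : V}
    (hall : ∀ M : Finset (V × V), G.IsMatching M → M.card = G.matchingNumber → Sat M x) :
    1 ≤ G.matchingNumber := by
  by_contra h
  have h0 : G.matchingNumber = 0 := by omega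
  have := hall ∅ G.isMatching_empty (by simp [h0])
  obtain ⟨p, hp, -⟩ := this
  exact absurd hp (Finset.notMem_empty p)

lemma matchingNumber_delete_lt {G : Multigraph V} {x : V}
    (hall : ∀ M : Finset (V × V), G.IsMatching M → M.card = G.matchingNumber → Sat M x) :
    (G.delete x).matchingNumber + 1 ≤ G.matchingNumber := by
  obtain ⟨K, hK, hKc⟩ := (G.delete x).exists_max_matching
  obtain ⟨hKG, hKavoid⟩ := isMatching_delete_iff.mp hK
  have h1 : K.card ≤ G.matchingNumber := hKG.card_le_matchingNumber
  rcases Nat.lt_or_ge K.card G.matchingNumber with h | h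
  · omega
  · exfalso
    have hKmax : K.card = G.matchingNumber := le_antisymm h1 h
    obtain ⟨p, hp, hor⟩ := hall K hKG hKmax
    rcases hor with h' | h'
    · exact (hKavoid p hp).1 h'.symm
    · exact (hKavoid p hp).2 h'.symm

/-- **Main inequality**: `m ≤ (d + ⌊d/2⌋) ν` for multigraphs of max degree `≤ d`. -/
lemma main_ineq {d : ℕ} : ∀ n : ℕ, ∀ G : Multigraph V,
    G.verts.card ≤ n → G.maxDegree ≤ d →
    G.edgeCount ≤ (d + d / 2) * G.matchingNumber := by
  intro n
  induction n with
  | zero =>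
    intro G hn _
    have hverts : G.verts = ∅ := Finset.card_eq_zero.mp (Nat.le_zero.mp hn)
    have : G.edgeCount = 0 := by
      apply edgeCount_eq_zero_of_no_adj
      intro u v hadj
      exact absurd (hverts ▸ hadj.mem_left) (Finset.notMem_empty u)
    omega
  | succ n ih =>
    intro G hn hΔ
    classical
    by_cases hedge : ∃ u v, G.Adj u v
    swap
    · push_neg at hedge
      rw [edgeCount_eq_zero_of_no_adj hedge]
      omega
    obtain ⟨u₀, v₀, hadj₀⟩ := hedge
    have hν1 : 1 ≤ G.matchingNumber := one_le_matchingNumber_of_adj hadj₀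
    by_cases hconn : ∀ a ∈ G.verts, ∀ b ∈ G.verts,
        Relation.ReflTransGen (fun a b => 0 < G.mult a b) a b
    · -- connected case
      by_cases hcrit : ∃ x ∈ G.verts, ∀ M : Finset (V × V),
          G.IsMatching M → M.card = G.matchingNumber → Sat M x
      · -- a vertex in every maximum matching: delete it
        obtain ⟨x, hx, hall⟩ := hcrit
        have hd1 := matchingNumber_le_delete_add_one G x
        have hd2 := matchingNumber_delete_lt hall
        have hrec : (G.delete x).edgeCount ≤ (d + d / 2) * (G.delete x).matchingNumber := by
          apply ih
          · rw [show (G.delete x).verts = G.verts.erase x from rfl,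
              Finset.card_erase_of_mem hx]
            have : 1 ≤ G.verts.card := Finset.card_pos.mpr ⟨x, hx⟩
            omega
          · exact le_trans (maxDegree_delete_le G x) hΔ
        have hsplit := edgeCount_delete hx
        have hdeg : G.degree x ≤ d := degree_le_of_maxDegree hΔ hx
        have hνd : (G.delete x).matchingNumber = G.matchingNumber - 1 := by omega
        rw [hνd] at hrec
        have hνsucc : G.matchingNumber = (G.matchingNumber - 1) + 1 := by omega
        rw [hνsucc, Nat.mul_add, Nat.mul_one]
        omega
      · -- every vertex missed by some maximum matching: Gallai
        push_neg at hcrit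
        have hmiss : ∀ v ∈ G.verts, ∃ N : Finset (V × V),
            G.IsMatching N ∧ N.card = G.matchingNumber ∧ ¬ Sat N v := by
          intro v hv
          obtain ⟨N, hN, hNc, hNs⟩ := hcrit v hv
          exact ⟨N, hN, hNc, hNs⟩
        have hcards := card_verts_le_of_gallai hconn hmiss
        have h2m := two_mul_edgeCount_le hΔ
        have hmul : d * G.verts.card ≤ d * (2 * G.matchingNumber + 1) :=
          Nat.mul_le_mul_left d hcards
        have hexp : d * (2 * G.matchingNumber + 1) = 2 * (d * G.matchingNumber) + d := by
          ring
        have hm2 : G.edgeCount ≤ d * G.matchingNumber + d / 2 := by omega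
        have hhalf : d / 2 ≤ (d / 2) * G.matchingNumber :=
          Nat.le_mul_of_pos_right _ hν1
        have : (d + d / 2) * G.matchingNumber
            = d * G.matchingNumber + (d / 2) * G.matchingNumber := by ring
        omega
    · -- disconnected case: split along a connected piece
      push_neg at hconn
      obtain ⟨a, ha, b, hb, hnr⟩ := hconn
      set A : Finset V := G.verts.filter
        (fun w => Relation.ReflTransGen (fun a b => 0 < G.mult a b) a w) with hA
      have haA : a ∈ A := by
        rw [hA, Finset.mem_filter]
        exact ⟨ha, Relation.ReflTransGen.refl⟩
      have hbA : b ∉ A := by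
        rw [hA, Finset.mem_filter]
        rintro ⟨-, h⟩
        exact hnr h
      have hAsub : A ⊆ G.verts := Finset.filter_subset _ _
      have hcross : G.NoCross A := by
        intro x hxA y hyA
        by_contra hmult
        have hadj : G.Adj x y := Nat.pos_of_ne_zero hmult
        have hyv : y ∈ G.verts := hadj.mem_right
        have hxr : Relation.ReflTransGen (fun a b => 0 < G.mult a b) a x :=
          (Finset.mem_filter.mp (hA ▸ hxA)).2
        have : y ∈ A := by
          rw [hA, Finset.mem_filter]
          exact ⟨hyv, hxr.tail hadj⟩
        exact hyA this
      set B : Finset V := G.verts \ A with hB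
      have hbB : b ∈ B := Finset.mem_sdiff.mpr ⟨hb, hbA⟩
      have e1 : (G.restrict A).verts = A := by
        rw [restrict_verts]; exact Finset.inter_eq_right.mpr hAsub
      have e2 : (G.restrict B).verts = B := by
        rw [restrict_verts]; exact Finset.inter_eq_right.mpr (hB ▸ Finset.sdiff_subset)
      have hcardA : A.card < G.verts.card := by
        apply Finset.card_lt_card
        rw [Finset.ssubset_iff_of_subset hAsub]
        exact ⟨b, hb, hbA⟩
      have hcardB : B.card < G.verts.card := by
        apply Finset.card_lt_card
        rw [Finset.ssubset_iff_of_subset (hB ▸ Finset.sdiff_subset)]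
        exact ⟨a, ha, fun h => (Finset.mem_sdiff.mp h).2 haA⟩
      have hmA : (G.restrict A).edgeCount ≤ (d + d / 2) * (G.restrict A).matchingNumber := by
        apply ih
        · rw [e1]; omega
        · exact le_trans (maxDegree_restrict_le G A) hΔ
      have hmB : (G.restrict B).edgeCount ≤ (d + d / 2) * (G.restrict B).matchingNumber := by
        apply ih
        · rw [e2]; omega
        · exact le_trans (maxDegree_restrict_le G B) hΔ
      have hsplitm := edgeCount_split hAsub hcross
      have hsplitν := matchingNumber_split hAsub hcross
      rw [← hB] at hsplitm hsplitν
      rw [hsplitm, hsplitν, Nat.mul_add]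
      omega

end Multigraph
namespace Multigraph

set_option linter.unusedSectionVars false

variable {V : Type*} [DecidableEq V]

lemma Tsum_triple {G : Multigraph V} {x y z : V} (hxy : x ≠ y) (hxz : x ≠ z)
    (hyz : y ≠ z) :
    Tsum G {x, y, z} = 2 * (G.mult x y + G.mult x z + G.mult y z) := by
  have hx : x ∉ (insert y {z} : Finset V) := by simp [hxy, hxz]
  have hy : y ∉ ({z} : Finset V) := by simp [hyz]
  unfold Tsum
  rw [show ({x, y, z} : Finset V) = insert x (insert y {z}) from rfl]
  rw [Finset.sum_insert hx, Finset.sum_insert hy]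
  simp only [Finset.sum_insert hx, Finset.sum_insert hy, Finset.sum_singleton]
  rw [G.loopless x, G.loopless y, G.loopless z, G.symm y x, G.symm z x, G.symm z y]
  ring

lemma degree_triple1 {G : Multigraph V} {x y z : V} (hv : G.verts = {x, y, z})
    (hxy : x ≠ y) (hxz : x ≠ z) (hyz : y ≠ z) :
    G.degree x = G.mult x y + G.mult x z := by
  have hx : x ∉ (insert y {z} : Finset V) := by simp [hxy, hxz]
  have hy : y ∉ ({z} : Finset V) := by simp [hyz]
  unfold degree
  rw [hv, show ({x, y, z} : Finset V) = insert x (insert y {z}) from rfl,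
    Finset.sum_insert hx, Finset.sum_insert hy, Finset.sum_singleton, G.loopless x]
  omega

lemma degree_triple2 {G : Multigraph V} {x y z : V} (hv : G.verts = {x, y, z})
    (hxy : x ≠ y) (hxz : x ≠ z) (hyz : y ≠ z) :
    G.degree y = G.mult x y + G.mult y z := by
  have hx : x ∉ (insert y {z} : Finset V) := by simp [hxy, hxz]
  have hy : y ∉ ({z} : Finset V) := by simp [hyz]
  unfold degree
  rw [hv, show ({x, y, z} : Finset V) = insert x (insert y {z}) from rfl,
    Finset.sum_insert hx, Finset.sum_insert hy, Finset.sum_singleton, G.loopless y,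
    G.symm y x]
  omega

lemma degree_triple3 {G : Multigraph V} {x y z : V} (hv : G.verts = {x, y, z})
    (hxy : x ≠ y) (hxz : x ≠ z) (hyz : y ≠ z) :
    G.degree z = G.mult x z + G.mult y z := by
  have hx : x ∉ (insert y {z} : Finset V) := by simp [hxy, hxz]
  have hy : y ∉ ({z} : Finset V) := by simp [hyz]
  unfold degree
  rw [hv, show ({x, y, z} : Finset V) = insert x (insert y {z}) from rfl,
    Finset.sum_insert hx, Finset.sum_insert hy, Finset.sum_singleton, G.loopless z,
    G.symm z x, G.symm z y]
  omega

lemma IsShannon.edgeCount_eq {G : Multigraph V} {d : ℕ} (h : G.IsShannon d) :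
    G.edgeCount = d + d / 2 := by
  obtain ⟨x, y, z, hxy, hxz, hyz, hv, e1, e2, e3⟩ := h
  have hT := two_mul_edgeCount G
  rw [hv, Tsum_triple hxy hxz hyz, e1, e2, e3] at hT
  omega

lemma IsShannon.matchingNumber_eq {G : Multigraph V} {d : ℕ} (hd : 2 ≤ d)
    (h : G.IsShannon d) : G.matchingNumber = 1 := by
  obtain ⟨x, y, z, hxy, hxz, hyz, hv, e1, e2, e3⟩ := h
  have hadj : G.Adj x y := by
    unfold Adj
    rw [e1]
    omega
  have hge := one_le_matchingNumber_of_adj hadj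
  have hcard3 : G.verts.card = 3 := by
    rw [hv]
    rw [Finset.card_insert_of_notMem (by simp [hxy, hxz]),
      Finset.card_insert_of_notMem (by simp [hyz]), Finset.card_singleton]
  obtain ⟨M, hM, hMc⟩ := G.exists_max_matching
  have := hM.two_mul_card_le_verts
  rw [hcard3, hMc] at this
  omega

lemma matchingNumber_eq_zero_of_edgeCount_eq_zero {G : Multigraph V}
    (h : G.edgeCount = 0) : G.matchingNumber = 0 := by
  obtain ⟨M, hM, hMc⟩ := G.exists_max_matching
  rcases Finset.eq_empty_or_nonempty M with rfl | ⟨p, hp⟩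
  · rw [← hMc]; simp
  · exfalso
    have hadj := hM.adj_of_mem hp
    have hT : Tsum G G.verts = 0 := by
      have := two_mul_edgeCount G
      omega
    have h1 : ∑ v ∈ G.verts, G.mult p.1 v ≤ Tsum G G.verts :=
      Finset.single_le_sum (f := fun u => ∑ v ∈ G.verts, G.mult u v)
        (fun _ _ => Nat.zero_le _) hadj.mem_left
    have h2 : G.mult p.1 p.2 ≤ ∑ v ∈ G.verts, G.mult p.1 v :=
      Finset.single_le_sum (fun _ _ => Nat.zero_le _) hadj.mem_right
    have : 0 < G.mult p.1 p.2 := hadj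
    omega

/-- **Equality analysis**: a connected multigraph with at least one edge
attaining the bound is a Shannon multigraph. -/
lemma equality_case {d : ℕ} (hd : 4 ≤ d) {G : Multigraph V}
    (hconn : G.Connected) (hΔ : G.maxDegree ≤ d)
    (heq : G.edgeCount = (d + d / 2) * G.matchingNumber)
    (hm1 : 1 ≤ G.edgeCount) : G.IsShannon d := by
  classical
  have hedge : ∃ u v, G.Adj u v := by
    by_contra h
    push_neg at h
    rw [edgeCount_eq_zero_of_no_adj h] at hm1
    omega
  obtain ⟨u₀, v₀, hadj₀⟩ := hedge
  have hν1 : 1 ≤ G.matchingNumber := one_le_matchingNumber_of_adj hadj₀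
  by_cases hcrit : ∃ x ∈ G.verts, ∀ M : Finset (V × V),
      G.IsMatching M → M.card = G.matchingNumber → Sat M x
  · -- leads to strict inequality: contradiction
    exfalso
    obtain ⟨x, hx, hall⟩ := hcrit
    have hd1 := matchingNumber_le_delete_add_one G x
    have hd2 := matchingNumber_delete_lt hall
    have hrec : (G.delete x).edgeCount ≤ (d + d / 2) * (G.delete x).matchingNumber :=
      main_ineq (G.delete x).verts.card (G.delete x) le_rfl
        (le_trans (maxDegree_delete_le G x) hΔ)
    have hsplit := edgeCount_delete hx
    have hdeg : G.degree x ≤ d := degree_le_of_maxDegree hΔ hx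
    have hνd : (G.delete x).matchingNumber = G.matchingNumber - 1 := by omega
    rw [hνd] at hrec
    have hνsucc : G.matchingNumber = (G.matchingNumber - 1) + 1 := by omega
    rw [hνsucc, Nat.mul_add, Nat.mul_one] at heq
    omega
  · push_neg at hcrit
    have hmiss : ∀ v ∈ G.verts, ∃ N : Finset (V × V),
        G.IsMatching N ∧ N.card = G.matchingNumber ∧ ¬ Sat N v := fun v hv => hcrit v hv
    have hcards := card_verts_le_of_gallai hconn hmiss
    have h2m := two_mul_edgeCount_le hΔ
    have hmul : d * G.verts.card ≤ d * (2 * G.matchingNumber + 1) :=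
      Nat.mul_le_mul_left d hcards
    have hexp : d * (2 * G.matchingNumber + 1) = 2 * (d * G.matchingNumber) + d := by ring
    have hm2 : G.edgeCount ≤ d * G.matchingNumber + d / 2 := by omega
    -- equality forces ν = 1
    have hν : G.matchingNumber = 1 := by
      by_contra hne
      have h2 : 2 ≤ G.matchingNumber := by omega
      have hY : (d + d / 2) * 2 ≤ (d + d / 2) * G.matchingNumber :=
        Nat.mul_le_mul_left _ h2
      have hZ : d * G.matchingNumber ≤ (d + d / 2) * G.matchingNumber := by
        apply Nat.mul_le_mul_right
        omega
      -- heq : m = (d + d/2) ν;  hm2 : m ≤ dν + d/2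
      have h3 : (d + d / 2) * G.matchingNumber
          = d * G.matchingNumber + (d / 2) * G.matchingNumber := by ring
      have h4 : (d / 2) * 2 ≤ (d / 2) * G.matchingNumber := Nat.mul_le_mul_left _ h2
      omega
    rw [hν, Nat.mul_one] at heq
    rw [hν] at hcards
    -- the vertex count is exactly 3
    have hn3 : G.verts.card = 3 := by
      rcases Nat.lt_or_ge G.verts.card 3 with h | h
      · exfalso
        have : d * G.verts.card ≤ d * 2 := Nat.mul_le_mul_left d (by omega)
        omega
      · omega
    obtain ⟨x, y, z, hxy, hxz, hyz, hv⟩ := Finset.card_eq_three.mp hn3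
    have hT := two_mul_edgeCount G
    rw [hv, Tsum_triple hxy hxz hyz] at hT
    have hdx : G.degree x ≤ d := degree_le_of_maxDegree hΔ (by rw [hv]; simp)
    have hdy : G.degree y ≤ d := degree_le_of_maxDegree hΔ (by rw [hv]; simp)
    have hdz : G.degree z ≤ d := degree_le_of_maxDegree hΔ (by rw [hv]; simp)
    rw [degree_triple1 hv hxy hxz hyz] at hdx
    rw [degree_triple2 hv hxy hxz hyz] at hdy
    rw [degree_triple3 hv hxy hxz hyz] at hdz
    set c := G.mult x y with hc
    set b := G.mult x z with hb
    set a := G.mult y z with ha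
    -- a + b + c = d + d/2, with pairwise sums ≤ d
    by_cases hcs : (d + 1) / 2 ≤ c
    · refine ⟨z, x, y, fun h => hxz h.symm, fun h => hyz h.symm, hxy, ?_, ?_, ?_, ?_⟩
      · rw [hv]; ext w; simp; tauto
      · rw [G.symm z x, ← hb]; omega
      · rw [G.symm z y, ← ha]; omega
      · rw [← hc]; omega
    · by_cases hbs : (d + 1) / 2 ≤ b
      · refine ⟨y, x, z, fun h => hxy h.symm, hyz, hxz, ?_, ?_, ?_, ?_⟩
        · rw [hv]; ext w; simp; tauto
        · rw [G.symm y x, ← hc]; omega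
        · rw [← ha]; omega
        · rw [← hb]; omega
      · refine ⟨x, y, z, hxy, hxz, hyz, hv, ?_, ?_, ?_⟩
        · rw [← hc]; omega
        · rw [← hb]; omega
        · rw [← ha]; omega

end Multigraph
/-- **Key matching theorem.** For `d ≥ 4`, a connected multigraph `G` with
`m` edges and `Δ(G) ≤ d` has `α'(G) ≥ m/⌊3d/2⌋`, with equality iff `m = 0`
or `G` is a Shannon multigraph of degree `d`. -/
theorem stmt2 {V : Type*} [DecidableEq V] (d m : ℕ) (hd : 4 ≤ d)
    (G : Multigraph V) (hconn : G.Connected) (hΔ : G.maxDegree ≤ d)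
    (hm : G.edgeCount = m) :
    (m : ℚ) / ((3 * d / 2 : ℕ) : ℚ) ≤ (G.matchingNumber : ℚ) ∧
      ((G.matchingNumber : ℚ) = (m : ℚ) / ((3 * d / 2 : ℕ) : ℚ) ↔
        m = 0 ∨ G.IsShannon d) := by
  have hL : (3 * d / 2 : ℕ) = d + d / 2 := by omega
  have hLpos : 0 < (3 * d / 2 : ℕ) := by omega
  have hLQ : (0 : ℚ) < ((3 * d / 2 : ℕ) : ℚ) := by exact_mod_cast hLpos
  have hineq : m ≤ (3 * d / 2 : ℕ) * G.matchingNumber := by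
    rw [hL, ← hm]
    exact Multigraph.main_ineq G.verts.card G le_rfl hΔ
  constructor
  · rw [div_le_iff₀ hLQ]
    have : m ≤ G.matchingNumber * (3 * d / 2 : ℕ) := by
      rw [Nat.mul_comm] at hineq; exact hineq
    exact_mod_cast this
  · constructor
    · intro heqQ
      rw [eq_div_iff (ne_of_gt hLQ)] at heqQ
      have heqN : m = (3 * d / 2 : ℕ) * G.matchingNumber := by
        have : (G.matchingNumber * (3 * d / 2 : ℕ) : ℚ) = (m : ℚ) := by exact_mod_cast heqQ
        have h2 : G.matchingNumber * (3 * d / 2 : ℕ) = m := by exact_mod_cast this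
        rw [← h2, Nat.mul_comm]
      rcases Nat.eq_zero_or_pos m with h0 | hpos
      · exact Or.inl h0
      · refine Or.inr (Multigraph.equality_case hd hconn hΔ ?_ ?_)
        · rw [hm, ← hL]; exact heqN
        · omega
    · rintro (rfl | hsh)
      · have hν0 : G.matchingNumber = 0 :=
          Multigraph.matchingNumber_eq_zero_of_edgeCount_eq_zero hm
        rw [hν0]
        simp
      · have hν := hsh.matchingNumber_eq (by omega)
        have hm' := hsh.edgeCount_eq
        rw [hm'] at hm
        rw [hν, ← hm, ← hL]
        rw [eq_div_iff (ne_of_gt hLQ)]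
        simp
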